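/- Pinching increases the tracial geometric mean: if P ∈ M_ℓ(ℂ) is an orthogonal projection, Q = I − P, and X, Y are positive semidefinite, then tgm(X,Y) ≤ tgm(PXP, PYP) + tgm(QXQ, QYQ). -/

import Mathlib

open Matrix
open scoped ComplexOrder InnerProductSpace

set_option linter.unusedSectionVars false

/-- The square root of a positive semidefinite matrix (the definition of the older Mathlib,
since removed from Mathlib). -/
noncomputable def Matrix.PosSemidef.sqrt {𝕜 : Type*} [RCLike 𝕜] {n : Type*} [Fintype n]
    [DecidableEq n] {A : Matrix n n 𝕜} (hA : A.PosSemidef) : Matrix n n 𝕜 :=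
  hA.1.eigenvectorUnitary.1 * diagonal ((↑) ∘ (√·) ∘ hA.1.eigenvalues) *
  (star hA.1.eigenvectorUnitary : Matrix n n 𝕜)

theorem Matrix.PosSemidef.isHermitian_sqrt {𝕜 : Type*} [RCLike 𝕜] {n : Type*} [Fintype n]
    [DecidableEq n] {A : Matrix n n 𝕜} (hA : A.PosSemidef) : hA.sqrt.IsHermitian := by
  have hD : (diagonal ((↑) ∘ (√·) ∘ hA.1.eigenvalues) : Matrix n n 𝕜)ᴴ =
      diagonal ((↑) ∘ (√·) ∘ hA.1.eigenvalues) := by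
    rw [diagonal_conjTranspose]
    congr 1
    funext i
    simp
  simp only [Matrix.IsHermitian, Matrix.PosSemidef.sqrt, conjTranspose_mul, hD]
  rw [star_eq_conjTranspose, conjTranspose_conjTranspose, Matrix.mul_assoc]

/-- The product `√X * Y * √X` is positive semidefinite. -/
theorem sqrt_mul_mul_sqrt_posSemidef {n : Type*} [Fintype n] [DecidableEq n]
    {X Y : Matrix n n ℂ} (hX : X.PosSemidef) (hY : Y.PosSemidef) :
    (hX.sqrt * Y * hX.sqrt).PosSemidef := by
  have h := hY.conjTranspose_mul_mul_same (B := hX.sqrt)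
  rwa [hX.isHermitian_sqrt.eq] at h

/-- The tracial geometric mean `tgm(X,Y) = trace √(√X·Y·√X)`. -/
noncomputable def tgm {n : Type*} [Fintype n] [DecidableEq n]
    {X Y : Matrix n n ℂ} (hX : X.PosSemidef) (hY : Y.PosSemidef) : ℝ :=
  ((sqrt_mul_mul_sqrt_posSemidef hX hY).sqrt.trace).re

theorem Matrix.PosSemidef.posSemidef_sqrt {n : Type*} [Fintype n] [DecidableEq n]
    {A : Matrix n n ℂ} (hA : A.PosSemidef) : hA.sqrt.PosSemidef := by
  have hd : (diagonal ((↑) ∘ (√·) ∘ hA.1.eigenvalues) : Matrix n n ℂ).PosSemidef := by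
    refine PosSemidef.diagonal fun i => ?_
    simpa using Complex.zero_le_real.mpr (Real.sqrt_nonneg (hA.1.eigenvalues i))
  have := hd.mul_mul_conjTranspose_same (hA.1.eigenvectorUnitary : Matrix n n ℂ)
  rwa [Matrix.PosSemidef.sqrt, star_eq_conjTranspose]

theorem Matrix.PosSemidef.sqrt_mul_self {n : Type*} [Fintype n] [DecidableEq n]
    {A : Matrix n n ℂ} (hA : A.PosSemidef) : hA.sqrt * hA.sqrt = A := by
  unfold Matrix.PosSemidef.sqrt
  set U := (hA.1.eigenvectorUnitary : Matrix n n ℂ)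
  set D := (diagonal ((↑) ∘ (√·) ∘ hA.1.eigenvalues) : Matrix n n ℂ) with hD
  calc U * D * star U * (U * D * star U) = U * (D * ((star U * U) * D)) * star U := by
        noncomm_ring
    _ = U * diagonal (RCLike.ofReal ∘ hA.1.eigenvalues) * star U := by
        rw [show star U * U = 1 from Unitary.coe_star_mul_self _, one_mul, hD,
          diagonal_mul_diagonal]
        refine congrArg (fun d => U * diagonal d * star U) (funext fun i => ?_)
        show ((√(hA.1.eigenvalues i) : ℝ) : ℂ) * ((√(hA.1.eigenvalues i) : ℝ) : ℂ)
          = ((hA.1.eigenvalues i : ℝ) : ℂ)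
        rw [← Complex.ofReal_mul, Real.mul_self_sqrt (hA.eigenvalues_nonneg i)]
    _ = A := hA.1.spectral_theorem.symm

namespace TGMAux

variable {n : Type*} [Fintype n] [DecidableEq n]

noncomputable def tn (M : Matrix n n ℂ) : ℝ :=
  ∑ i, Real.sqrt ((Matrix.posSemidef_conjTranspose_mul_self M).1.eigenvalues i)

lemma eig_congr {A B : Matrix n n ℂ} (h : A = B) (hA : A.IsHermitian) (hB : B.IsHermitian) :
    hA.eigenvalues = hB.eigenvalues := by subst h; rfl

lemma tn_congr {M N : Matrix n n ℂ} (h : Mᴴ * M = Nᴴ * N) : tn M = tn N := by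
  unfold tn
  rw [eig_congr h (Matrix.posSemidef_conjTranspose_mul_self M).1
    (Matrix.posSemidef_conjTranspose_mul_self N).1]

lemma trace_sqrt {A : Matrix n n ℂ} (hA : A.PosSemidef) :
    hA.sqrt.trace = ∑ i, (Real.sqrt (hA.1.eigenvalues i) : ℂ) := by
  rw [Matrix.PosSemidef.sqrt, Matrix.trace_mul_cycle,
    show (star (hA.1.eigenvectorUnitary : Matrix n n ℂ)) * (hA.1.eigenvectorUnitary : Matrix n n ℂ)
      = 1 from Unitary.coe_star_mul_self _, one_mul, trace_diagonal]
  rfl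

lemma tn_eq_re_trace (M : Matrix n n ℂ) :
    tn M = ((Matrix.posSemidef_conjTranspose_mul_self M).sqrt.trace).re := by
  rw [trace_sqrt, tn]
  simp

lemma sqrt_congr {A B : Matrix n n ℂ} (h : A = B) (hA : A.PosSemidef) (hB : B.PosSemidef) :
    hA.sqrt = hB.sqrt := by subst h; rfl

set_option maxHeartbeats 2000000 in
lemma tgm_eq_tn {X Y : Matrix n n ℂ} (hX : X.PosSemidef) (hY : Y.PosSemidef) :
    tgm hX hY = tn (hY.sqrt * hX.sqrt) := by
  have key : hX.sqrt * Y * hX.sqrt = (hY.sqrt * hX.sqrt)ᴴ * (hY.sqrt * hX.sqrt) := by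
    calc hX.sqrt * Y * hX.sqrt = hX.sqrt * (hY.sqrt * hY.sqrt) * hX.sqrt := by
          rw [hY.sqrt_mul_self]
      _ = (hY.sqrt * hX.sqrt)ᴴ * (hY.sqrt * hX.sqrt) := by
          rw [conjTranspose_mul, hY.posSemidef_sqrt.1.eq, hX.posSemidef_sqrt.1.eq]
          noncomm_ring
  unfold tgm
  rw [tn_eq_re_trace,
    sqrt_congr key (sqrt_mul_mul_sqrt_posSemidef hX hY)
      (Matrix.posSemidef_conjTranspose_mul_self _)]

lemma proj_absorb {P X : Matrix n n ℂ} (hP2 : P * P = P) (hPh : Pᴴ = P) (hX : X.PosSemidef) :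
    P * (hX.conjTranspose_mul_mul_same P).sqrt = (hX.conjTranspose_mul_mul_same P).sqrt := by
  set S := (hX.conjTranspose_mul_mul_same P).sqrt with hS
  have hSh : Sᴴ = S := (hX.conjTranspose_mul_mul_same P).posSemidef_sqrt.isHermitian.eq
  have hSS : S * S = Pᴴ * X * P := (hX.conjTranspose_mul_mul_same P).sqrt_mul_self
  have h0 : ((1 - P) * S) * ((1 - P) * S)ᴴ = 0 := by
    rw [conjTranspose_mul, hSh, conjTranspose_sub, conjTranspose_one, hPh]
    calc (1 - P) * S * (S * (1 - P)) = (1 - P) * (S * S) * (1 - P) := by noncomm_ring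
    _ = ((1 - P) * Pᴴ) * X * (P * (1 - P)) := by rw [hSS]; noncomm_ring
    _ = 0 := by rw [hPh]; simp [mul_sub, sub_mul, hP2]
  have hz := Matrix.self_mul_conjTranspose_eq_zero.mp h0
  have h1 : S - P * S = 0 := by rw [← hz]; noncomm_ring
  linear_combination (norm := noncomm_ring) -h1

noncomputable def emb (v : n → ℂ) : EuclideanSpace ℂ n := (WithLp.equiv 2 _).symm v

lemma adj_move (K : Matrix n n ℂ) (v w : n → ℂ) :
    star v ⬝ᵥ (K *ᵥ w) = star (Kᴴ *ᵥ v) ⬝ᵥ w := by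
  rw [star_mulVec, conjTranspose_conjTranspose, dotProduct_mulVec]

lemma dot_eq_inner (v w : n → ℂ) : star v ⬝ᵥ w = ⟪emb v, emb w⟫_ℂ :=
  by rw [dotProduct_comm]; rfl

lemma dot_self_eq_norm_sq (v : n → ℂ) : star v ⬝ᵥ v = (‖emb v‖ ^ 2 : ℝ) := by
  rw [dot_eq_inner, inner_self_eq_norm_sq_to_K]
  norm_num

lemma trace_eq_sum_dot (A : Matrix n n ℂ) {H : Matrix n n ℂ} (hH : H.IsHermitian) :
    A.trace = ∑ i, star ⇑(hH.eigenvectorBasis i) ⬝ᵥ (A *ᵥ ⇑(hH.eigenvectorBasis i)) := by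
  set U := (hH.eigenvectorUnitary : Matrix n n ℂ) with hU
  have h1 : A.trace = (star U * A * U).trace := by
    rw [trace_mul_comm, ← mul_assoc,
      show U * star U = 1 from Unitary.coe_mul_star_self _, one_mul]
  rw [h1, Matrix.trace]
  refine Finset.sum_congr rfl fun i _ => ?_
  simp only [diag_apply, mul_apply, star_apply, dotProduct, mulVec, Finset.sum_mul,
    Finset.mul_sum, hU, IsHermitian.eigenvectorUnitary_apply, Pi.star_apply]
  rw [Finset.sum_comm]
  refine Finset.sum_congr rfl fun p _ => Finset.sum_congr rfl fun q _ => ?_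
  ring

lemma norm_mulVec_le {K : Matrix n n ℂ} (hK : (1 - K * Kᴴ).PosSemidef) (v : n → ℂ) :
    ‖emb (Kᴴ *ᵥ v)‖ ≤ ‖emb v‖ := by
  have h := hK.dotProduct_mulVec_nonneg v
  rw [sub_mulVec, one_mulVec, dotProduct_sub] at h
  have h2 : star v ⬝ᵥ ((K * Kᴴ) *ᵥ v) = (‖emb (Kᴴ *ᵥ v)‖ ^ 2 : ℝ) := by
    rw [← mulVec_mulVec, adj_move, dot_self_eq_norm_sq]
  rw [dot_self_eq_norm_sq v, h2, sub_nonneg] at h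
  have := Complex.real_le_real.mp h
  nlinarith [norm_nonneg (emb (Kᴴ *ᵥ v)), norm_nonneg (emb v)]

lemma dot_BvBv (B : Matrix n n ℂ) {H : Matrix n n ℂ} (hH : H.IsHermitian) (hHB : H = Bᴴ * B)
    (i : n) :
    star (B *ᵥ ⇑(hH.eigenvectorBasis i)) ⬝ᵥ (B *ᵥ ⇑(hH.eigenvectorBasis i))
      = ((hH.eigenvalues i : ℝ) : ℂ) := by
  set v := ⇑(hH.eigenvectorBasis i) with hv
  calc star (B *ᵥ v) ⬝ᵥ (B *ᵥ v)
      = star v ⬝ᵥ (Bᴴ *ᵥ (B *ᵥ v)) := by rw [adj_move Bᴴ, conjTranspose_conjTranspose]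
    _ = star v ⬝ᵥ (H *ᵥ v) := by rw [mulVec_mulVec, ← hHB]
    _ = star v ⬝ᵥ ((hH.eigenvalues i) • v) := by rw [hH.mulVec_eigenvectorBasis]
    _ = (hH.eigenvalues i) • (star v ⬝ᵥ v) := by
        simp [dotProduct_smul]
    _ = ((hH.eigenvalues i : ℝ) : ℂ) := by
        rw [dot_self_eq_norm_sq]
        have : emb v = hH.eigenvectorBasis i := rfl
        rw [this, hH.eigenvectorBasis.orthonormal.1 i]
        simp [Complex.real_smul]

lemma norm_B_eigen (B : Matrix n n ℂ) {H : Matrix n n ℂ} (hH : H.IsHermitian) (hHB : H = Bᴴ * B)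
    (i : n) :
    ‖emb (B *ᵥ ⇑(hH.eigenvectorBasis i))‖ = Real.sqrt (hH.eigenvalues i) := by
  have h1 := dot_BvBv B hH hHB i
  rw [dot_self_eq_norm_sq] at h1
  have h2 : ‖emb (B *ᵥ ⇑(hH.eigenvectorBasis i))‖ ^ 2 = hH.eigenvalues i :=
    Complex.ofReal_inj.mp h1
  rw [← h2, Real.sqrt_sq (norm_nonneg _)]

lemma re_trace_le_tn (K B : Matrix n n ℂ) (hK : (1 - K * Kᴴ).PosSemidef) :
    ((K * B).trace).re ≤ tn B := by
  set hH := (Matrix.posSemidef_conjTranspose_mul_self B).1 with hHdef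
  rw [trace_eq_sum_dot (K * B) hH, Complex.re_sum]
  refine Finset.sum_le_sum fun i _ => ?_
  set v := ⇑(hH.eigenvectorBasis i) with hv
  have h1 : star v ⬝ᵥ ((K * B) *ᵥ v) = ⟪emb (Kᴴ *ᵥ v), emb (B *ᵥ v)⟫_ℂ := by
    rw [← mulVec_mulVec, adj_move, dot_eq_inner]
  rw [h1]
  calc (⟪emb (Kᴴ *ᵥ v), emb (B *ᵥ v)⟫_ℂ).re
      ≤ ‖⟪emb (Kᴴ *ᵥ v), emb (B *ᵥ v)⟫_ℂ‖ := Complex.re_le_norm _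
    _ ≤ ‖emb (Kᴴ *ᵥ v)‖ * ‖emb (B *ᵥ v)‖ := norm_inner_le_norm _ _
    _ ≤ 1 * ‖emb (B *ᵥ v)‖ := by
        refine mul_le_mul_of_nonneg_right ?_ (norm_nonneg _)
        have := norm_mulVec_le hK v
        have hnv : ‖emb v‖ = 1 := hH.eigenvectorBasis.orthonormal.1 i
        linarith
    _ = Real.sqrt (hH.eigenvalues i) := by
        rw [one_mul, norm_B_eigen B hH rfl]

section cf

variable {H : Matrix n n ℂ} (hH : H.IsHermitian)

noncomputable def cf (f : ℝ → ℝ) : Matrix n n ℂ :=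
  (hH.eigenvectorUnitary : Matrix n n ℂ) * diagonal (RCLike.ofReal ∘ f ∘ hH.eigenvalues) *
    star (hH.eigenvectorUnitary : Matrix n n ℂ)

lemma diag_congr (f g : n → ℂ) (h : ∀ i, f i = g i) : diagonal f = diagonal g :=
  congrArg diagonal (funext h)

lemma cf_mul (f g : ℝ → ℝ) : cf hH f * cf hH g = cf hH (fun x => f x * g x) := by
  unfold cf
  set U := (hH.eigenvectorUnitary : Matrix n n ℂ)
  calc U * diagonal (RCLike.ofReal ∘ f ∘ hH.eigenvalues) * star U *
        (U * diagonal (RCLike.ofReal ∘ g ∘ hH.eigenvalues) * star U)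
      = U * (diagonal (RCLike.ofReal ∘ f ∘ hH.eigenvalues) * ((star U * U) *
          diagonal (RCLike.ofReal ∘ g ∘ hH.eigenvalues))) * star U := by noncomm_ring
    _ = U * diagonal (RCLike.ofReal ∘ (fun x => f x * g x) ∘ hH.eigenvalues) * star U := by
        rw [show star U * U = 1 from Unitary.coe_star_mul_self _, one_mul,
          diagonal_mul_diagonal]
        rw [diag_congr _ (RCLike.ofReal ∘ (fun x => f x * g x) ∘ hH.eigenvalues) (fun i => by simp)]

lemma cf_sub (f g : ℝ → ℝ) : cf hH f - cf hH g = cf hH (fun x => f x - g x) := by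
  unfold cf
  rw [← sub_mul, ← mul_sub, diagonal_sub,
    diag_congr _ (RCLike.ofReal ∘ (fun x => f x - g x) ∘ hH.eigenvalues) (fun i => by simp)]

lemma cf_one : cf hH (fun _ => 1) = 1 := by
  unfold cf
  rw [diag_congr _ (fun _ => (1:ℂ)) (fun i => by simp), diagonal_one, mul_one]
  exact Unitary.coe_mul_star_self _

lemma cf_id : cf hH id = H := by
  rw [cf]
  exact hH.spectral_theorem.symm

lemma cf_conjTranspose (f : ℝ → ℝ) : (cf hH f)ᴴ = cf hH f := by
  unfold cf
  rw [conjTranspose_mul, conjTranspose_mul, diagonal_conjTranspose]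
  rw [← star_eq_conjTranspose, ← star_eq_conjTranspose, star_star, mul_assoc]
  rw [diag_congr (star (RCLike.ofReal ∘ f ∘ hH.eigenvalues)) (RCLike.ofReal ∘ f ∘ hH.eigenvalues)
    (fun i => by simp [Pi.star_apply])]

lemma cf_posSemidef (f : ℝ → ℝ) (hf : ∀ i, 0 ≤ f (hH.eigenvalues i)) :
    (cf hH f).PosSemidef := by
  have hd : (diagonal (RCLike.ofReal ∘ f ∘ hH.eigenvalues : n → ℂ)).PosSemidef := by
    refine PosSemidef.diagonal fun i => ?_
    simpa using Complex.zero_le_real.mpr (hf i)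
  have := hd.mul_mul_conjTranspose_same (hH.eigenvectorUnitary : Matrix n n ℂ)
  rwa [cf, star_eq_conjTranspose]

lemma cf_trace (f : ℝ → ℝ) : (cf hH f).trace = ∑ i, ((f (hH.eigenvalues i) : ℝ) : ℂ) := by
  rw [cf, Matrix.trace_mul_cycle,
    show (star (hH.eigenvectorUnitary : Matrix n n ℂ)) * (hH.eigenvectorUnitary : Matrix n n ℂ)
      = 1 from Unitary.coe_star_mul_self _, one_mul, trace_diagonal]
  rfl

end cf



lemma sqrt_aux_ineq {l e : ℝ} (hl : 0 ≤ l) (he : 0 < e) :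
    Real.sqrt l - Real.sqrt e ≤ l * (Real.sqrt (l + e))⁻¹ := by
  have hle : 0 < l + e := by linarith
  have hs : 0 < Real.sqrt (l + e) := Real.sqrt_pos.mpr hle
  rw [← div_eq_mul_inv, le_div_iff₀ hs]
  have h1 : Real.sqrt (l + e) ≤ Real.sqrt l + Real.sqrt e := by
    rw [show l + e = Real.sqrt l ^ 2 + Real.sqrt e ^ 2 by
      rw [Real.sq_sqrt hl, Real.sq_sqrt he.le]]
    calc Real.sqrt (Real.sqrt l ^ 2 + Real.sqrt e ^ 2)
        ≤ Real.sqrt ((Real.sqrt l + Real.sqrt e) ^ 2) := by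
          apply Real.sqrt_le_sqrt
          nlinarith [Real.sqrt_nonneg l, Real.sqrt_nonneg e]
      _ = Real.sqrt l + Real.sqrt e := Real.sqrt_sq (by positivity)
  nlinarith [Real.sqrt_nonneg l, Real.sqrt_nonneg e, Real.sq_sqrt hl, Real.sq_sqrt he.le,
    Real.sq_sqrt hle.le, hs]

lemma exists_contraction (B : Matrix n n ℂ) {e : ℝ} (he : 0 < e) :
    ∃ K : Matrix n n ℂ, (1 - K * Kᴴ).PosSemidef ∧
      tn B ≤ ((K * B).trace).re + (Fintype.card n) * Real.sqrt e := by
  have hp := Matrix.posSemidef_conjTranspose_mul_self B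
  have hH : (Bᴴ * B).IsHermitian := hp.1
  have heig : ∀ i, 0 ≤ hH.eigenvalues i := hp.eigenvalues_nonneg
  set g : ℝ → ℝ := fun x => (Real.sqrt (x + e))⁻¹ with hg
  refine ⟨cf hH g * Bᴴ, ?_, ?_⟩
  · have hKK : cf hH g * Bᴴ * (cf hH g * Bᴴ)ᴴ = cf hH (fun x => g x * x * g x) := by
      rw [conjTranspose_mul, conjTranspose_conjTranspose, cf_conjTranspose]
      calc cf hH g * Bᴴ * (B * cf hH g) = cf hH g * (Bᴴ * B) * cf hH g := by noncomm_ring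
        _ = cf hH g * cf hH id * cf hH g := by rw [cf_id]
        _ = cf hH (fun x => g x * x * g x) := by rw [cf_mul, cf_mul]; rfl
    rw [hKK, show (1 : Matrix n n ℂ) = cf hH (fun _ => 1) from (cf_one hH).symm,
      cf_sub hH]
    refine cf_posSemidef hH _ fun i => ?_
    set l := hH.eigenvalues i
    have hl : 0 ≤ l := heig i
    have hle : 0 < l + e := by linarith
    have hs : 0 < Real.sqrt (l + e) := Real.sqrt_pos.mpr hle
    have hgl : g l * l * g l = l / (l + e) := by
      simp only [hg]
      rw [eq_div_iff hle.ne', ← Real.mul_self_sqrt hle.le]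
      field_simp
      rw [Real.sqrt_sq hs.le]
    rw [hgl]
    have h1 : l / (l + e) ≤ 1 := (div_le_one hle).mpr (by linarith)
    linarith
  · have hKB : (cf hH g * Bᴴ) * B = cf hH (fun x => g x * x) := by
      have h1 : cf hH g * cf hH id = cf hH (fun x => g x * x) := by rw [cf_mul]; rfl
      rw [mul_assoc, ← h1, cf_id]
    rw [hKB, cf_trace]
    have hre : (∑ i, ((g (hH.eigenvalues i) * hH.eigenvalues i : ℝ) : ℂ)).re
        = ∑ i, g (hH.eigenvalues i) * hH.eigenvalues i := by
      rw [Complex.re_sum]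
      exact Finset.sum_congr rfl fun i _ => Complex.ofReal_re _
    rw [hre, tn]
    have step : ∀ i : n, Real.sqrt (hH.eigenvalues i)
        ≤ g (hH.eigenvalues i) * hH.eigenvalues i + Real.sqrt e := by
      intro i
      have := sqrt_aux_ineq (heig i) he
      simp only [hg]
      nlinarith [this]
    calc ∑ i, Real.sqrt (hH.eigenvalues i)
        ≤ ∑ i, (g (hH.eigenvalues i) * hH.eigenvalues i + Real.sqrt e) :=
          Finset.sum_le_sum fun i _ => step i
      _ = (∑ i, g (hH.eigenvalues i) * hH.eigenvalues i) + (Fintype.card n) * Real.sqrt e := by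
          rw [Finset.sum_add_distrib, Finset.sum_const, Finset.card_univ, nsmul_eq_mul]

lemma tn_add_le (A B : Matrix n n ℂ) : tn (A + B) ≤ tn A + tn B := by
  refine le_of_forall_pos_le_add fun δ hδ => ?_
  have hepos : (0:ℝ) < (δ / (Fintype.card n + 1))^2 := by positivity
  obtain ⟨K, hK, hbound⟩ := exists_contraction (A + B) hepos
  have h1 : ((K * (A+B)).trace).re = ((K*A).trace).re + ((K*B).trace).re := by
    rw [mul_add, trace_add, Complex.add_re]
  have h2 := re_trace_le_tn K A hK
  have h3 := re_trace_le_tn K B hK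
  have h4 : (Fintype.card n : ℝ) * Real.sqrt ((δ / (Fintype.card n + 1))^2) < δ := by
    rw [Real.sqrt_sq (by positivity)]
    have hc : (Fintype.card n : ℝ) < Fintype.card n + 1 := by linarith
    calc (Fintype.card n : ℝ) * (δ / (Fintype.card n + 1))
        < (Fintype.card n + 1) * (δ / (Fintype.card n + 1)) := by
          exact mul_lt_mul_of_pos_right hc (by positivity)
      _ = δ := by field_simp
  linarith

lemma real_aux {l : ℝ} (hl : 0 ≤ l) : l * (Real.sqrt l)⁻¹ = Real.sqrt l := by
  rcases eq_or_lt_of_le hl with h | h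
  · simp [← h]
  · rw [← Real.mul_self_sqrt hl]
    have : Real.sqrt l ≠ 0 := by positivity
    field_simp
    rw [Real.sqrt_sq (Real.sqrt_nonneg l)]

lemma tn_conjTranspose (M : Matrix n n ℂ) : tn Mᴴ = tn M := by
  have hp := Matrix.posSemidef_conjTranspose_mul_self M
  have hH : (Mᴴ * M).IsHermitian := hp.1
  have hp' := Matrix.posSemidef_conjTranspose_mul_self Mᴴ
  have hmm : M * Mᴴ = Mᴴᴴ * Mᴴ := by rw [conjTranspose_conjTranspose]
  have hQ : (M * Mᴴ).IsHermitian := hmm ▸ hp'.1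
  have hQeig : hp'.1.eigenvalues = hQ.eigenvalues := eig_congr hmm.symm _ _
  set lam := hH.eigenvalues with hlam
  set mu := hQ.eigenvalues with hmu
  set e := hH.eigenvectorBasis with he
  set f := hQ.eigenvectorBasis with hf
  have hlam0 : ∀ i, 0 ≤ lam i := hp.eigenvalues_nonneg
  have hmu0 : ∀ j, 0 ≤ mu j := fun j => hQeig ▸ hp'.eigenvalues_nonneg j
  set a : n → n → ℂ := fun i j => star ⇑(f j) ⬝ᵥ (M *ᵥ ⇑(e i)) with ha
  set s : n → n → ℝ := fun i j => Complex.normSq (a i j) with hs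
  -- row sums
  have hrow : ∀ i, ∑ j, s i j = lam i := by
    intro i
    have hpar := f.sum_inner_mul_inner (emb (M *ᵥ ⇑(e i))) (emb (M *ᵥ ⇑(e i)))
    have hterm : ∀ j, ⟪emb (M *ᵥ ⇑(e i)), f j⟫_ℂ * ⟪f j, emb (M *ᵥ ⇑(e i))⟫_ℂ
        = ((s i j : ℝ) : ℂ) := by
      intro j
      have h1 : ⟪f j, emb (M *ᵥ ⇑(e i))⟫_ℂ = a i j := (dot_eq_inner _ _).symm
      rw [← inner_conj_symm (emb (M *ᵥ ⇑(e i))) (f j)] at *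
      rw [h1, hs]
      simp [Complex.normSq_eq_conj_mul_self]
    have h2 : ⟪emb (M *ᵥ ⇑(e i)), emb (M *ᵥ ⇑(e i))⟫_ℂ = ((lam i : ℝ) : ℂ) := by
      rw [← dot_eq_inner]
      exact dot_BvBv M hH rfl i
    have h3 : (∑ j, ((s i j : ℝ) : ℂ)) = ((lam i : ℝ) : ℂ) := by
      rw [← Finset.sum_congr rfl fun j _ => hterm j, hpar, h2]
    exact_mod_cast h3
  -- column sums
  have hacol : ∀ i j, a i j = ⟪emb (Mᴴ *ᵥ ⇑(f j)), e i⟫_ℂ := by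
    intro i j
    rw [ha]
    show star ⇑(f j) ⬝ᵥ (M *ᵥ ⇑(e i)) = _
    rw [adj_move, dot_eq_inner]
    rfl
  have hcol : ∀ j, ∑ i, s i j = mu j := by
    intro j
    have hpar := e.sum_inner_mul_inner (emb (Mᴴ *ᵥ ⇑(f j))) (emb (Mᴴ *ᵥ ⇑(f j)))
    have hterm : ∀ i, ⟪emb (Mᴴ *ᵥ ⇑(f j)), e i⟫_ℂ * ⟪e i, emb (Mᴴ *ᵥ ⇑(f j))⟫_ℂ
        = ((s i j : ℝ) : ℂ) := by
      intro i
      rw [← inner_conj_symm (e i) (emb (Mᴴ *ᵥ ⇑(f j))), ← hacol i j, hs]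
      simp [Complex.mul_conj]
    have h2 : ⟪emb (Mᴴ *ᵥ ⇑(f j)), emb (Mᴴ *ᵥ ⇑(f j))⟫_ℂ = ((mu j : ℝ) : ℂ) := by
      rw [← dot_eq_inner]
      exact dot_BvBv Mᴴ hQ hmm j
    have h3 : (∑ i, ((s i j : ℝ) : ℂ)) = ((mu j : ℝ) : ℂ) := by
      rw [← Finset.sum_congr rfl fun i _ => hterm i, hpar, h2]
    exact_mod_cast h3
  -- eigenvalue matching
  have hmatch : ∀ i j, a i j ≠ 0 → lam i = mu j := by
    intro i j hne
    have key : (mu j : ℂ) * a i j = (lam i : ℂ) * a i j := by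
      have lhs : star ⇑(f j) ⬝ᵥ ((M * Mᴴ) *ᵥ (M *ᵥ ⇑(e i))) = (mu j : ℂ) * a i j := by
        rw [adj_move, hQ.eq, hQ.mulVec_eigenvectorBasis]
        rw [star_smul, smul_dotProduct, ha]
        simp [Complex.real_smul]
        rfl
      have rhs : star ⇑(f j) ⬝ᵥ ((M * Mᴴ) *ᵥ (M *ᵥ ⇑(e i))) = (lam i : ℂ) * a i j := by
        have hmv : (M * Mᴴ) *ᵥ (M *ᵥ ⇑(e i)) = (lam i : ℝ) • (M *ᵥ ⇑(e i)) := by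
          rw [mulVec_mulVec, show M * Mᴴ * M = M * (Mᴴ * M) by rw [mul_assoc],
            ← mulVec_mulVec, hH.mulVec_eigenvectorBasis, mulVec_smul]
        rw [hmv, dotProduct_smul, ha]
        simp [Complex.real_smul]
      rw [← lhs, rhs]
    have : ((mu j : ℂ) - (lam i : ℂ)) * a i j = 0 := by rw [sub_mul, key, sub_self]
    rcases mul_eq_zero.mp this with h | h
    · have := sub_eq_zero.mp h
      exact_mod_cast this.symm
    · exact absurd h hne
  -- final computation
  have key1 : ∀ i, Real.sqrt (lam i) = ∑ j, s i j * (Real.sqrt (lam i))⁻¹ := by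
    intro i
    rw [← Finset.sum_mul, hrow i, real_aux (hlam0 i)]
  have key3 : ∀ j, Real.sqrt (mu j) = ∑ i, s i j * (Real.sqrt (mu j))⁻¹ := by
    intro j
    rw [← Finset.sum_mul, hcol j, real_aux (hmu0 j)]
  have key2 : ∀ i j, s i j * (Real.sqrt (lam i))⁻¹ = s i j * (Real.sqrt (mu j))⁻¹ := by
    intro i j
    by_cases hz : a i j = 0
    · simp [hs, hz]
    · rw [hmatch i j hz]
  have main : ∑ i, Real.sqrt (lam i) = ∑ j, Real.sqrt (mu j) := by
    calc ∑ i, Real.sqrt (lam i) = ∑ i, ∑ j, s i j * (Real.sqrt (lam i))⁻¹ :=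
          Finset.sum_congr rfl fun i _ => key1 i
      _ = ∑ i, ∑ j, s i j * (Real.sqrt (mu j))⁻¹ := by
          exact Finset.sum_congr rfl fun i _ => Finset.sum_congr rfl fun j _ => key2 i j
      _ = ∑ j, ∑ i, s i j * (Real.sqrt (mu j))⁻¹ := Finset.sum_comm
      _ = ∑ j, Real.sqrt (mu j) := Finset.sum_congr rfl fun j _ => (key3 j).symm
  show (∑ j, Real.sqrt (hp'.1.eigenvalues j)) = ∑ i, Real.sqrt (hp.1.eigenvalues i)
  rw [show hp'.1.eigenvalues = mu from hQeig]
  exact main.symm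


lemma pinched_tn {X Y P : Matrix n n ℂ} (hX : X.PosSemidef) (hY : Y.PosSemidef)
    (hP2 : P * P = P) (hPh : Pᴴ = P) :
    tn (hY.sqrt * P * hX.sqrt)
      = tgm (hX.conjTranspose_mul_mul_same P) (hY.conjTranspose_mul_mul_same P) := by
  have hX' := hX.conjTranspose_mul_mul_same P
  have hY' := hY.conjTranspose_mul_mul_same P
  have hSxh : hX.sqrtᴴ = hX.sqrt := hX.posSemidef_sqrt.1.eq
  have hSyh : hY.sqrtᴴ = hY.sqrt := hY.posSemidef_sqrt.1.eq
  have hSx'h : hX'.sqrtᴴ = hX'.sqrt := hX'.posSemidef_sqrt.1.eq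
  have hSy'h : hY'.sqrtᴴ = hY'.sqrt := hY'.posSemidef_sqrt.1.eq
  have habsX : P * hX'.sqrt = hX'.sqrt := proj_absorb hP2 hPh hX
  have habsX2 : hX'.sqrt * Pᴴ = hX'.sqrt := by
    have := congrArg conjTranspose habsX
    rwa [conjTranspose_mul, hSx'h] at this
  have step1 : tn (hY.sqrt * P * hX.sqrt) = tn (hX.sqrt * P * hY.sqrt) := by
    have e1 : (hY.sqrt * P * hX.sqrt)ᴴ = hX.sqrt * P * hY.sqrt := by
      rw [conjTranspose_mul, conjTranspose_mul, hSxh, hSyh, hPh, ← mul_assoc]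
    rw [← tn_conjTranspose (hY.sqrt * P * hX.sqrt), e1]
  have step2 : tn (hX.sqrt * P * hY.sqrt) = tn (hX'.sqrt * hY.sqrt) := by
    refine tn_congr ?_
    have l1 : (hX.sqrt * P * hY.sqrt)ᴴ * (hX.sqrt * P * hY.sqrt)
        = hY.sqrt * (Pᴴ * (hX.sqrt * hX.sqrt) * P) * hY.sqrt := by
      rw [conjTranspose_mul, conjTranspose_mul, hSxh, hSyh]
      noncomm_ring
    have l2 : (hX'.sqrt * hY.sqrt)ᴴ * (hX'.sqrt * hY.sqrt)
        = hY.sqrt * (hX'.sqrt * hX'.sqrt) * hY.sqrt := by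
      rw [conjTranspose_mul, hSx'h, hSyh]
      noncomm_ring
    rw [l1, l2, hX.sqrt_mul_self, hX'.sqrt_mul_self]
  have step3 : tn (hX'.sqrt * hY.sqrt) = tn (hY.sqrt * hX'.sqrt) := by
    have e1 : (hX'.sqrt * hY.sqrt)ᴴ = hY.sqrt * hX'.sqrt := by
      rw [conjTranspose_mul, hSx'h, hSyh]
    rw [← tn_conjTranspose (hX'.sqrt * hY.sqrt), e1]
  have step4 : tn (hY.sqrt * hX'.sqrt) = tn (hY'.sqrt * hX'.sqrt) := by
    refine tn_congr ?_
    have l1 : (hY.sqrt * hX'.sqrt)ᴴ * (hY.sqrt * hX'.sqrt)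
        = hX'.sqrt * (hY.sqrt * hY.sqrt) * hX'.sqrt := by
      rw [conjTranspose_mul, hSx'h, hSyh]
      noncomm_ring
    have l2 : (hY'.sqrt * hX'.sqrt)ᴴ * (hY'.sqrt * hX'.sqrt)
        = hX'.sqrt * (hY'.sqrt * hY'.sqrt) * hX'.sqrt := by
      rw [conjTranspose_mul, hSx'h, hSy'h]
      noncomm_ring
    rw [l1, l2, hY.sqrt_mul_self, hY'.sqrt_mul_self]
    calc hX'.sqrt * Y * hX'.sqrt
        = (hX'.sqrt * Pᴴ) * Y * (P * hX'.sqrt) := by rw [habsX2, habsX]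
      _ = hX'.sqrt * (Pᴴ * Y * P) * hX'.sqrt := by noncomm_ring
  rw [step1, step2, step3, step4, tgm_eq_tn]

lemma tgm_pinch_main {X Y P : Matrix n n ℂ} (hX : X.PosSemidef) (hY : Y.PosSemidef)
    (hP2 : P * P = P) (hPh : Pᴴ = P) :
    tgm hX hY ≤
      tgm (hX.conjTranspose_mul_mul_same P) (hY.conjTranspose_mul_mul_same P) +
      tgm (hX.conjTranspose_mul_mul_same (1 - P)) (hY.conjTranspose_mul_mul_same (1 - P)) := by
  have hQ2 : (1 - P) * (1 - P) = 1 - P := by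
    rw [sub_mul, one_mul, mul_sub, mul_one, hP2]
    abel
  have hQh : (1 - P)ᴴ = 1 - P := by rw [conjTranspose_sub, conjTranspose_one, hPh]
  rw [tgm_eq_tn hX hY]
  have split : hY.sqrt * hX.sqrt = hY.sqrt * P * hX.sqrt + hY.sqrt * (1 - P) * hX.sqrt := by
    noncomm_ring
  calc tn (hY.sqrt * hX.sqrt)
      = tn (hY.sqrt * P * hX.sqrt + hY.sqrt * (1 - P) * hX.sqrt) := by rw [← split]
    _ ≤ tn (hY.sqrt * P * hX.sqrt) + tn (hY.sqrt * (1 - P) * hX.sqrt) := tn_add_le _ _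
    _ = _ := by rw [pinched_tn hX hY hP2 hPh, pinched_tn hX hY hQ2 hQh]

end TGMAux

/-- Pinching increases the tracial geometric mean: for an orthogonal projection `P`
and `Q = I − P`, `tgm(X,Y) ≤ tgm(PXP, PYP) + tgm(QXQ, QYQ)`. -/
theorem tgm_le_pinching {ℓ : ℕ} {X Y : Matrix (Fin ℓ) (Fin ℓ) ℂ}
    (hX : X.PosSemidef) (hY : Y.PosSemidef)
    {P : Matrix (Fin ℓ) (Fin ℓ) ℂ} (hP2 : P * P = P) (hPh : Pᴴ = P) :
    tgm hX hY ≤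
      tgm (hX.conjTranspose_mul_mul_same P) (hY.conjTranspose_mul_mul_same P) +
      tgm (hX.conjTranspose_mul_mul_same (1 - P)) (hY.conjTranspose_mul_mul_same (1 - P)) :=
  TGMAux.tgm_pinch_main hX hY hP2 hPh
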